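/- In the group G = ⟨a,b,c | bab⁻¹ = a², cbc⁻¹ = b²⟩ with H = ⟨a⟩, for every positive integer n the identity a^(2^(2^n)) = c^n b c^(-n) a c^n b⁻¹ c^(-n) holds; consequently Dist^H_G(4n+2) ≥ 2^(2^n), so the upper distortion Dist^H_G is at least doubly exponential and hence not dominated by any exponential function. -/

import Mathlib

/-- Domination relation: `f ≼ g` iff there are positive constants `A, B, C` with
`f x ≤ g (A*x) + B*x` for all `x > C`. -/
def Dominates (f g : ℝ → ℝ) : Prop :=
  ∃ A B C : ℝ, 0 < A ∧ 0 < B ∧ 0 < C ∧ ∀ x : ℝ, C < x → f x ≤ g (A * x) + B * x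

/-- `f ∼ g` iff `f ≼ g` and `g ≼ f`. -/
def FEquiv (f g : ℝ → ℝ) : Prop := Dominates f g ∧ Dominates g f

/-- The word length of `g` with respect to the (symmetrized) alphabet `S`. -/
noncomputable def wordLength {G : Type*} [Group G] (S : Set G) (g : G) : ℕ :=
  sInf {n | ∃ w : List G, (∀ x ∈ w, x ∈ S ∨ x⁻¹ ∈ S) ∧ w.prod = g ∧ w.length = n}

/-- The lower distortion of the subset `K` of `G`:
`dist(r) = min { |k|_T : k ∈ K, |k|_S ≥ r }` (with `min ∅ = 0`). -/
noncomputable def lowerDist {G : Type*} [Group G] (S K T : Set G) (r : ℝ) : ℝ :=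
  sInf {y : ℝ | ∃ k ∈ K, r ≤ (wordLength S k : ℝ) ∧ y = (wordLength T k : ℝ)}

/-- The upper distortion of the subset `K` of `G`:
`Dist(r) = max { |k|_T : k ∈ K, |k|_S ≤ r }`. -/
noncomputable def upperDist {G : Type*} [Group G] (S K T : Set G) (r : ℝ) : ℝ :=
  sSup {y : ℝ | ∃ k ∈ K, (wordLength S k : ℝ) ≤ r ∧ y = (wordLength T k : ℝ)}


/-- The relators of Gromov's group `⟨a,b,c | bab⁻¹ = a², cbc⁻¹ = b²⟩`
(generators `0 ↦ a`, `1 ↦ b`, `2 ↦ c`). -/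
def gromovRels : Set (FreeGroup (Fin 3)) :=
  {FreeGroup.of 1 * FreeGroup.of 0 * (FreeGroup.of 1)⁻¹ * ((FreeGroup.of 0) ^ 2)⁻¹,
   FreeGroup.of 2 * FreeGroup.of 1 * (FreeGroup.of 2)⁻¹ * ((FreeGroup.of 1) ^ 2)⁻¹}

/-- Gromov's group `G = ⟨a,b,c | bab⁻¹ = a², cbc⁻¹ = b²⟩`. -/
abbrev GromovGroup := PresentedGroup gromovRels

namespace GromovGroup

def a : GromovGroup := PresentedGroup.of 0
def b : GromovGroup := PresentedGroup.of 1
def c : GromovGroup := PresentedGroup.of 2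

/-- The generating set `S = {a,b,c}`. -/
def gens : Set GromovGroup := {a, b, c}

/-- The upper distortion `Dist^H_G` of `H = ⟨a⟩` in `G`. -/
noncomputable def Dist : ℝ → ℝ :=
  upperDist gens ((Subgroup.zpowers a : Subgroup GromovGroup) : Set GromovGroup) {a}

end GromovGroup

open GromovGroup


noncomputable section

def ea : Equiv.Perm ℝ := ⟨fun x => x + 1, fun x => x - 1, fun x => by ring, fun x => by ring⟩
def eb : Equiv.Perm ℝ := ⟨fun x => 2 * x, fun x => x / 2, fun x => by ring, fun x => by ring⟩

def ec : Equiv.Perm ℝ where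
  toFun x := x * |x|
  invFun y := if 0 ≤ y then Real.sqrt y else -Real.sqrt (-y)
  left_inv x := by
    simp only
    rcases le_or_gt 0 x with hx | hx
    · rw [abs_of_nonneg hx, if_pos (mul_self_nonneg x), Real.sqrt_mul_self hx]
    · rw [abs_of_neg hx]
      have h1 : x * -x < 0 := by nlinarith
      rw [if_neg (not_le.mpr h1)]
      have : -(x * -x) = (-x) * (-x) := by ring
      rw [this, Real.sqrt_mul_self (by linarith), neg_neg]
  right_inv y := by
    simp only
    rcases le_or_gt 0 y with hy | hy
    · rw [if_pos hy, abs_of_nonneg (Real.sqrt_nonneg y), Real.mul_self_sqrt hy]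
    · rw [if_neg (not_le.mpr hy)]
      have h0 : (0:ℝ) ≤ Real.sqrt (-y) := Real.sqrt_nonneg _
      rw [abs_of_nonpos (by linarith), neg_neg, neg_mul,
        Real.mul_self_sqrt (by linarith), neg_neg]

lemma eb_ea : eb * ea = ea ^ 2 * eb := by
  ext x
  simp [ea, eb, pow_two, Equiv.Perm.mul_apply, Equiv.coe_fn_mk]
  ring

lemma ec_eb : ec * eb = eb ^ 2 * ec := by
  ext x
  simp [eb, ec, pow_two, Equiv.Perm.mul_apply, Equiv.coe_fn_mk, abs_mul]
  ring

lemma ea_pow (n : ℕ) (x : ℝ) : (ea ^ n) x = x + n := by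
  induction n with
  | zero => simp [ea]
  | succ n ih => rw [pow_succ', Equiv.Perm.mul_apply, ih]; simp [ea]; ring

lemma ea_zpow (s : ℤ) (x : ℝ) : (ea ^ s) x = x + s := by
  rcases s with n | n
  · simpa using ea_pow n x
  · have key : (ea ^ (n+1)) ((ea ^ (Int.negSucc n)) x) = x := by
      rw [← Equiv.Perm.mul_apply, ← zpow_natCast, ← zpow_add]
      have : ((n+1 : ℕ) : ℤ) + Int.negSucc n = 0 := by
        push_cast
        rw [Int.negSucc_eq]; ring
      rw [this, zpow_zero, Equiv.Perm.one_apply]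
    rw [ea_pow] at key
    have : (Int.negSucc n : ℝ) = -(n+1) := by
      rw [Int.cast_negSucc]; push_cast; ring
    rw [this]
    push_cast at key
    linarith

end

namespace GromovGroup

lemma mk_rel_one {r : FreeGroup (Fin 3)} (hr : r ∈ gromovRels) :
    PresentedGroup.mk gromovRels r = 1 :=
  (QuotientGroup.eq_one_iff _).mpr (Subgroup.subset_normalClosure hr)

lemma rel1 : b * a * b⁻¹ = a ^ 2 := by
  have h := mk_rel_one (Set.mem_insert _ _)
  have : b * a * b⁻¹ * (a ^ 2)⁻¹ = 1 := by
    simpa [a, b, PresentedGroup.of, map_mul, map_inv, map_pow] using h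
  exact mul_inv_eq_one.mp this

lemma rel2 : c * b * c⁻¹ = b ^ 2 := by
  have h := mk_rel_one (Set.mem_insert_of_mem _ rfl)
  have : c * b * c⁻¹ * (b ^ 2)⁻¹ = 1 := by
    simpa [b, c, PresentedGroup.of, map_mul, map_inv, map_pow] using h
  exact mul_inv_eq_one.mp this

lemma conj_pow_two {G : Type*} [Group G] {g h : G} (hyp : g * h * g⁻¹ = h ^ 2) (m : ℕ) :
    g ^ m * h * (g ^ m)⁻¹ = h ^ (2 ^ m) := by
  induction m with
  | zero => simp
  | succ m ih =>
    have : g ^ (m + 1) * h * (g ^ (m + 1))⁻¹ = g * (g ^ m * h * (g ^ m)⁻¹) * g⁻¹ := by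
      group
    rw [this, ih, ← conj_pow, hyp, ← pow_mul, ← pow_succ']

lemma key (n : ℕ) :
    a ^ (2 ^ (2 ^ n)) = c ^ n * b * (c ^ n)⁻¹ * a * c ^ n * b⁻¹ * (c ^ n)⁻¹ := by
  have h1 : c ^ n * b * (c ^ n)⁻¹ = b ^ (2 ^ n) := conj_pow_two rel2 n
  have h2 : b ^ (2 ^ n) * a * (b ^ (2 ^ n))⁻¹ = a ^ (2 ^ (2 ^ n)) := conj_pow_two rel1 (2 ^ n)
  calc a ^ (2 ^ (2 ^ n)) = (c ^ n * b * (c ^ n)⁻¹) * a * (c ^ n * b * (c ^ n)⁻¹)⁻¹ := by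
        rw [h1, h2]
      _ = c ^ n * b * (c ^ n)⁻¹ * a * c ^ n * b⁻¹ * (c ^ n)⁻¹ := by group

end GromovGroup

noncomputable def permf : Fin 3 → Equiv.Perm ℝ := ![ea, eb, ec]

lemma permf_rels : ∀ r ∈ gromovRels, FreeGroup.lift permf r = 1 := by
  intro r hr
  rcases hr with h | h <;> subst h <;>
    simp only [map_mul, map_inv, map_pow, FreeGroup.lift_apply_of, permf] <;>
    rw [mul_inv_eq_one, mul_inv_eq_iff_eq_mul] <;>
    simp only [Matrix.cons_val_zero, Matrix.cons_val_one, Matrix.head_cons, Matrix.cons_val_two,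
      Matrix.tail_cons]
  · exact eb_ea
  · exact ec_eb

noncomputable def phi : GromovGroup →* Equiv.Perm ℝ := PresentedGroup.toGroup permf_rels

lemma phi_a : phi GromovGroup.a = ea := PresentedGroup.toGroup.of permf_rels

lemma a_zpow_inj {s t : ℤ} (h : GromovGroup.a ^ s = GromovGroup.a ^ t) : s = t := by
  have := congrArg phi h
  rw [map_zpow, map_zpow, phi_a] at this
  have h0 := congrArg (fun (p : Equiv.Perm ℝ) => p 0) this
  simp only [ea_zpow] at h0
  simp only [zero_add, Int.cast_inj] at h0
  exact_mod_cast h0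

section WordLemmas
open GromovGroup

lemma word_in_a {w : List GromovGroup}
    (hw : ∀ x ∈ w, x ∈ ({a} : Set GromovGroup) ∨ x⁻¹ ∈ ({a} : Set GromovGroup)) :
    ∃ s : ℤ, w.prod = a ^ s ∧ s.natAbs ≤ w.length := by
  induction w with
  | nil => exact ⟨0, by simp⟩
  | cons x w ih =>
    obtain ⟨s, hs, hb⟩ := ih fun y hy => hw y (List.mem_cons_of_mem _ hy)
    rcases hw x List.mem_cons_self with hx | hx
    · rw [Set.mem_singleton_iff] at hx
      refine ⟨1 + s, ?_, ?_⟩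
      · rw [List.prod_cons, hs, hx, zpow_add, zpow_one]
      · calc (1 + s).natAbs ≤ (1:ℤ).natAbs + s.natAbs := Int.natAbs_add_le _ _
          _ ≤ (x :: w).length := by simp; omega
    · rw [Set.mem_singleton_iff] at hx
      have hx' : x = a⁻¹ := by rw [← hx]; simp
      refine ⟨-1 + s, ?_, ?_⟩
      · rw [List.prod_cons, hs, hx', zpow_add, zpow_neg_one]
      · calc (-1 + s).natAbs ≤ (-1:ℤ).natAbs + s.natAbs := Int.natAbs_add_le _ _
          _ ≤ (x :: w).length := by simp; omega

lemma wl_a_ge (N : ℕ) : N ≤ wordLength ({a} : Set GromovGroup) (a ^ N) := by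
  have hne : {n | ∃ w : List GromovGroup, (∀ x ∈ w, x ∈ ({a} : Set GromovGroup) ∨
      x⁻¹ ∈ ({a} : Set GromovGroup)) ∧ w.prod = a ^ N ∧ w.length = n}.Nonempty := by
    refine ⟨N, List.replicate N a, ?_, ?_, ?_⟩
    · intro x hx
      rw [List.eq_of_mem_replicate hx]
      exact Or.inl rfl
    · rw [List.prod_replicate]
    · rw [List.length_replicate]
  obtain ⟨w, hw, hprod, hlen⟩ := Nat.sInf_mem hne
  obtain ⟨s, hs, hb⟩ := word_in_a hw
  have : s = (N : ℤ) := by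
    apply a_zpow_inj
    rw [← hs, hprod, zpow_natCast]
  rw [this] at hb
  rw [wordLength, ← hlen]
  exact hb

lemma mem_gens_a : a ∈ gens := Set.mem_insert _ _
lemma mem_gens_b : b ∈ gens := Set.mem_insert_of_mem _ (Set.mem_insert _ _)
lemma mem_gens_c : c ∈ gens := Set.mem_insert_of_mem _ (Set.mem_insert_of_mem _ rfl)

lemma key2 (m : ℕ) :
    c ^ m * (b * b) * (c ^ m)⁻¹ * a * (c ^ m * (b⁻¹ * b⁻¹) * (c ^ m)⁻¹) =
      a ^ 2 ^ 2 ^ (m + 1) := by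
  have h1 : c ^ m * b * (c ^ m)⁻¹ = b ^ 2 ^ m := GromovGroup.conj_pow_two rel2 m
  have hβ : c ^ m * (b * b) * (c ^ m)⁻¹ = b ^ 2 ^ (m + 1) := by
    have : c ^ m * (b * b) * (c ^ m)⁻¹ =
        (c ^ m * b * (c ^ m)⁻¹) * (c ^ m * b * (c ^ m)⁻¹) := by group
    set_option linter.unusedTactic false in skip
    rw [this, h1, ← pow_add]
    congr 1
    omega
  have hβ' : c ^ m * (b⁻¹ * b⁻¹) * (c ^ m)⁻¹ = (c ^ m * (b * b) * (c ^ m)⁻¹)⁻¹ := by group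
  rw [hβ', hβ, ← GromovGroup.conj_pow_two rel1 (2 ^ (m + 1))]

lemma wl_gens_le (n : ℕ) (hn : 0 < n) : wordLength gens (a ^ 2 ^ 2 ^ n) ≤ 4 * n + 1 := by
  obtain ⟨m, rfl⟩ := Nat.exists_eq_succ_of_ne_zero hn.ne'
  apply Nat.sInf_le
  refine ⟨List.replicate m c ++ [b, b] ++ List.replicate m c⁻¹ ++ [a] ++ List.replicate m c
    ++ [b⁻¹, b⁻¹] ++ List.replicate m c⁻¹, ?_, ?_, ?_⟩
  · intro x hx
    simp only [List.mem_append, List.mem_cons, List.not_mem_nil, or_false,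
      List.mem_singleton] at hx
    rcases hx with ((((((hx | (hx | hx)) | hx) | hx) | hx) | (hx | hx)) | hx)
    · exact Or.inl (by rw [List.eq_of_mem_replicate hx]; exact mem_gens_c)
    · exact Or.inl (hx ▸ mem_gens_b)
    · exact Or.inl (hx ▸ mem_gens_b)
    · exact Or.inr (by rw [List.eq_of_mem_replicate hx, inv_inv]; exact mem_gens_c)
    · exact Or.inl (hx ▸ mem_gens_a)
    · exact Or.inl (by rw [List.eq_of_mem_replicate hx]; exact mem_gens_c)
    · exact Or.inr (by rw [hx, inv_inv]; exact mem_gens_b)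
    · exact Or.inr (by rw [hx, inv_inv]; exact mem_gens_b)
    · exact Or.inr (by rw [List.eq_of_mem_replicate hx, inv_inv]; exact mem_gens_c)
  · simp only [List.prod_append, List.prod_replicate, List.prod_cons, List.prod_nil,
      List.prod_singleton, inv_pow, mul_one]
    rw [← key2 m]
    group
  · simp only [List.length_append, List.length_replicate, List.length_cons,
      List.length_singleton, List.length_nil]
    omega

lemma exists_word (k : GromovGroup) :
    ∃ w : List GromovGroup, (∀ x ∈ w, x ∈ gens ∪ gens⁻¹) ∧ w.prod = k := by
  have hrange : Set.range (PresentedGroup.of : Fin 3 → GromovGroup) = gens := by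
    ext x
    constructor
    · rintro ⟨i, rfl⟩
      fin_cases i
      · exact mem_gens_a
      · exact mem_gens_b
      · exact mem_gens_c
    · rintro (rfl | rfl | rfl)
      exacts [⟨0, rfl⟩, ⟨1, rfl⟩, ⟨2, rfl⟩]
  have hk : k ∈ Subgroup.closure gens := by
    rw [← hrange, PresentedGroup.closure_range_of]
    trivial
  have hk' : k ∈ Submonoid.closure (gens ∪ gens⁻¹) := by
    rw [← Subgroup.closure_toSubmonoid]
    exact hk
  exact Submonoid.exists_list_of_mem_closure hk'

lemma finite_ball (m : ℕ) : {k : GromovGroup | wordLength gens k ≤ m}.Finite := by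
  classical
  have hAfin : (gens ∪ gens⁻¹ : Set GromovGroup).Finite := by
    have h1 : gens.Finite := (Set.finite_singleton c).insert b |>.insert a
    exact h1.union h1.inv
  have : Finite ↥(gens ∪ gens⁻¹ : Set GromovGroup) := hAfin.to_subtype
  apply Set.Finite.subset (((List.finite_length_le ↥(gens ∪ gens⁻¹ : Set GromovGroup) m).image
    (fun l => (l.map Subtype.val).prod)))
  intro k hk
  obtain ⟨w0, hw0, hprod0⟩ := exists_word k
  have hne : {n | ∃ w : List GromovGroup, (∀ x ∈ w, x ∈ gens ∨ x⁻¹ ∈ gens) ∧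
      w.prod = k ∧ w.length = n}.Nonempty := by
    refine ⟨w0.length, w0, fun x hx => ?_, hprod0, rfl⟩
    rcases hw0 x hx with h | h
    exacts [Or.inl h, Or.inr (Set.mem_inv.mp h)]
  obtain ⟨v, hv, hvprod, hvlen⟩ := Nat.sInf_mem hne
  have hvmem : ∀ x ∈ v, x ∈ (gens ∪ gens⁻¹ : Set GromovGroup) := by
    intro x hx
    rcases hv x hx with h | h
    exacts [Set.mem_union_left _ h, Set.mem_union_right _ (Set.mem_inv.mpr h)]
  refine ⟨v.attach.map (fun y => (⟨y.1, hvmem y.1 y.2⟩ : ↥(gens ∪ gens⁻¹ : Set GromovGroup))),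
    ?_, ?_⟩
  · simp only [Set.mem_setOf_eq, List.length_map, List.length_attach]
    rw [hvlen]
    exact hk
  · simp only [List.map_map]
    have : (v.attach.map fun y => ((⟨y.1, hvmem y.1 y.2⟩ :
        ↥(gens ∪ gens⁻¹ : Set GromovGroup)) : GromovGroup)) = v := by
      simp
    rw [Function.comp_def]
    simp only [this]
    exact hvprod

lemma bdd (r : ℝ) : BddAbove {y : ℝ |
    ∃ k ∈ ((Subgroup.zpowers a : Subgroup GromovGroup) : Set GromovGroup),
      (wordLength gens k : ℝ) ≤ r ∧ y = (wordLength ({a} : Set GromovGroup) k : ℝ)} := by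
  apply Set.Finite.bddAbove
  apply Set.Finite.subset ((finite_ball ⌊r⌋₊).image
    (fun k => (wordLength ({a} : Set GromovGroup) k : ℝ)))
  rintro y ⟨k, _, hle, rfl⟩
  exact ⟨k, Nat.le_floor hle, rfl⟩

lemma dist_ge (n : ℕ) (hn : 0 < n) : ((2 : ℝ) ^ (2 ^ n) : ℝ) ≤ GromovGroup.Dist (4 * n + 2) := by
  set N : ℕ := 2 ^ 2 ^ n with hN
  have hmem : ((wordLength ({a} : Set GromovGroup) (a ^ N) : ℕ) : ℝ) ∈ {y : ℝ |
      ∃ k ∈ ((Subgroup.zpowers a : Subgroup GromovGroup) : Set GromovGroup),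
        (wordLength gens k : ℝ) ≤ ((4 * n + 2 : ℝ)) ∧
        y = (wordLength ({a} : Set GromovGroup) k : ℝ)} := by
    refine ⟨a ^ N, ⟨(N : ℤ), (zpow_natCast a N).symm ▸ rfl⟩, ?_, rfl⟩
    · calc (wordLength gens (a ^ N) : ℝ) ≤ ((4 * n + 1 : ℕ) : ℝ) := by
            exact_mod_cast wl_gens_le n hn
        _ ≤ (4 * n + 2 : ℝ) := by push_cast; linarith
  calc ((2 : ℝ) ^ (2 ^ n) : ℝ) = ((N : ℕ) : ℝ) := by rw [hN]; push_cast; ring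
    _ ≤ ((wordLength ({a} : Set GromovGroup) (a ^ N) : ℕ) : ℝ) := by
        exact_mod_cast wl_a_ge N
    _ ≤ GromovGroup.Dist (4 * n + 2) := le_csSup (bdd _) hmem

end WordLemmas


section Part3
open GromovGroup

lemma sq_le_two_pow' : ∀ n : ℕ, 4 ≤ n → n * n ≤ 2 ^ n := by
  intro n hn
  induction n with
  | zero => omega
  | succ n ih =>
    rcases Nat.lt_or_ge n 4 with h | h
    · interval_cases n <;> simp_all <;> omega
    · have h1 := ih (by omega)
      have h2 : 2 * n + 1 ≤ n * n := by nlinarith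
      calc (n+1) * (n+1) = n * n + (2 * n + 1) := by ring
        _ ≤ 2 ^ n + 2 ^ n := by omega
        _ = 2 ^ (n + 1) := by ring

lemma cast_succ_le_two_pow (n : ℕ) : (n : ℝ) + 1 ≤ 2 ^ n := by
  have h := Nat.lt_two_pow_self (n := n)
  have : (n + 1 : ℕ) ≤ 2 ^ n := h
  exact_mod_cast this

lemma not_dominated (x y z : ℝ) (hx : 1 < x) (hy : 0 < y) :
    ¬ Dominates GromovGroup.Dist (fun t => x ^ (y * t + z)) := by
  rintro ⟨A, B, C, hA, hB, hC, hdom⟩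
  obtain ⟨u, hu⟩ := pow_unbounded_of_one_lt x (one_lt_two (α := ℝ))
  obtain ⟨q, hq⟩ := pow_unbounded_of_one_lt B (one_lt_two (α := ℝ))
  set K := ⌈y * A * 4⌉₊ with hK
  set L := ⌈y * A * 2 + z⌉₊ with hL
  set s := u * K with hs
  set p := u * L with hp
  set m := s + p + q + 5 with hm
  set n := max (max 4 m) (⌈C⌉₊ + 1) with hn
  have hn4 : 4 ≤ n := le_trans (le_max_left _ _) (le_max_left _ _)
  have hnm : m ≤ n := le_trans (le_max_right _ _) (le_max_left _ _)
  have hnC : ⌈C⌉₊ + 1 ≤ n := le_max_right _ _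
  have hn1 : 1 ≤ n := by omega
  have hn0 : 0 < n := by omega
  -- C < 4n+2
  have hCn : C < 4 * (n : ℝ) + 2 := by
    have h1 : C ≤ (⌈C⌉₊ : ℝ) := Nat.le_ceil C
    have h2 : ((⌈C⌉₊ : ℕ) : ℝ) + 1 ≤ (n : ℝ) := by exact_mod_cast hnC
    have h3 : (0:ℝ) ≤ n := Nat.cast_nonneg n
    linarith
  have hdist := dist_ge n hn0
  have hbound := hdom (4 * n + 2) hCn
  simp only at hbound
  -- bound the rpow term
  have hx0 : (0:ℝ) < x := lt_trans zero_lt_one hx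
  have hcast : y * (A * (4 * (n:ℝ) + 2)) + z ≤ ((K * n + L : ℕ) : ℝ) := by
    have h1 : y * A * 4 ≤ (K : ℝ) := Nat.le_ceil _
    have h2 : y * A * 2 + z ≤ (L : ℝ) := Nat.le_ceil _
    have h3 : (0:ℝ) ≤ n := Nat.cast_nonneg n
    push_cast
    nlinarith
  have hrpow : x ^ (y * (A * (4 * (n:ℝ) + 2)) + z) ≤ (2:ℝ) ^ (s * n + p) := by
    calc x ^ (y * (A * (4 * (n:ℝ) + 2)) + z)
        ≤ x ^ (((K * n + L : ℕ) : ℝ)) := Real.rpow_le_rpow_of_exponent_le hx.le hcast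
      _ = x ^ (K * n + L : ℕ) := Real.rpow_natCast x _
      _ ≤ ((2:ℝ) ^ u) ^ (K * n + L : ℕ) := pow_le_pow_left₀ hx0.le hu.le _
      _ = (2:ℝ) ^ (u * (K * n + L)) := by rw [← pow_mul]
      _ = (2:ℝ) ^ (s * n + p) := by rw [hs, hp]; ring_nf
  -- bound the linear term
  have hlin : B * (4 * (n:ℝ) + 2) < (2:ℝ) ^ (q + n + 3) := by
    have h1 : (4 * (n:ℝ) + 2) ≤ (2:ℝ) ^ (n + 3) := by
      have h2 := cast_succ_le_two_pow n
      have h3 : (2:ℝ) ^ (n + 3) = 8 * 2 ^ n := by rw [pow_add]; ring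
      nlinarith
    have h4 : (0:ℝ) < 4 * (n:ℝ) + 2 := by positivity
    calc B * (4 * (n:ℝ) + 2) < (2:ℝ) ^ q * (4 * (n:ℝ) + 2) := by
          apply mul_lt_mul_of_pos_right hq h4
      _ ≤ (2:ℝ) ^ q * (2:ℝ) ^ (n + 3) := by
          apply mul_le_mul_of_nonneg_left h1 (by positivity)
      _ = (2:ℝ) ^ (q + n + 3) := by rw [← pow_add]; ring_nf
  -- exponent arithmetic
  have hw1 : s * n + p + 1 ≤ m * n := by
    have : (p + q + 5) * n ≥ (p + q + 5) * 1 := Nat.mul_le_mul_left _ hn1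
    calc s * n + p + 1 ≤ s * n + (p + q + 5) * 1 := by omega
      _ ≤ s * n + (p + q + 5) * n := by omega
      _ = m * n := by rw [hm]; ring
  have hw2 : q + n + 3 + 1 ≤ m * n := by
    have h5 : (s + p + q + 4) * n ≥ (s + p + q + 4) * 1 := Nat.mul_le_mul_left _ hn1
    calc q + n + 3 + 1 ≤ (s + p + q + 4) * 1 + n := by omega
      _ ≤ (s + p + q + 4) * n + n := by omega
      _ = m * n := by rw [hm]; ring
  have hw3 : m * n ≤ 2 ^ n := by
    calc m * n ≤ n * n := Nat.mul_le_mul_right _ hnm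
      _ ≤ 2 ^ n := sq_le_two_pow' n hn4
  have hsum : (2:ℝ) ^ (s * n + p) + (2:ℝ) ^ (q + n + 3) ≤ (2:ℝ) ^ (2 ^ n) := by
    have e1 : s * n + p ≤ m * n - 1 := by omega
    have e2 : q + n + 3 ≤ m * n - 1 := by omega
    have e3 : m * n - 1 + 1 = m * n := by omega
    have p1 : (2:ℝ) ^ (s * n + p) ≤ (2:ℝ) ^ (m * n - 1) :=
      pow_le_pow_right₀ one_le_two e1
    have p2 : (2:ℝ) ^ (q + n + 3) ≤ (2:ℝ) ^ (m * n - 1) :=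
      pow_le_pow_right₀ one_le_two e2
    have p3 : (2:ℝ) ^ (m * n - 1) + (2:ℝ) ^ (m * n - 1) = (2:ℝ) ^ (m * n) := by
      calc (2:ℝ) ^ (m * n - 1) + (2:ℝ) ^ (m * n - 1) = (2:ℝ) ^ (m * n - 1) * 2 := by ring
        _ = (2:ℝ) ^ (m * n - 1 + 1) := (pow_succ 2 _).symm
        _ = (2:ℝ) ^ (m * n) := by rw [e3]
    have p4 : (2:ℝ) ^ (m * n) ≤ (2:ℝ) ^ (2 ^ n) := pow_le_pow_right₀ one_le_two hw3
    linarith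
  linarith
end Part3

/-- In `G = ⟨a,b,c | bab⁻¹ = a², cbc⁻¹ = b²⟩` with `H = ⟨a⟩`, the identity
`a^(2^(2^n)) = cⁿ b c⁻ⁿ a cⁿ b⁻¹ c⁻ⁿ` holds for all positive `n`; consequently
`Dist^H_G(4n+2) ≥ 2^(2^n)`, and hence `Dist^H_G` is not dominated by any
exponential function. -/
theorem gromov_group_distortion :
    (∀ n : ℕ, 0 < n →
      a ^ (2 ^ (2 ^ n)) = c ^ n * b * (c ^ n)⁻¹ * a * c ^ n * b⁻¹ * (c ^ n)⁻¹) ∧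
    (∀ n : ℕ, 0 < n → ((2 : ℝ) ^ (2 ^ n) : ℝ) ≤ GromovGroup.Dist (4 * n + 2)) ∧
    (∀ x y z : ℝ, 1 < x → 0 < y → ¬ Dominates GromovGroup.Dist (fun t => x ^ (y * t + z))) := by
  refine ⟨fun n _ => GromovGroup.key n, fun n hn => dist_ge n hn, not_dominated⟩
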